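/- Let S be a deterministic action-based randomization mechanism with Act = {a_1,…,a_k}, U an uncertainty measure and p a prior on X. Let σ = [a_1,…,a_k] be the non-adaptive strategy that plays every action in Act exactly once. Then I_σ(S,p) = I(X;[X]); hence the maximum information flow I_⋆(S,p) equals I_σ(S,p) and is achieved by this brute-force non-adaptive strategy. -/

import Mathlib

open scoped BigOperators Classical

noncomputable section

variable {X Y A : Type*}

/-- Conditional product of transition probabilities along `ys`, where the action at each
step is chosen by the strategy `σ` applied to the accumulated prefix `pre`
(`0` if the strategy is undefined on some prefix). -/
def likAux (M : A → X → Y → ℝ) (σ : List Y → Option A) (x : X) : List Y → List Y → ℝ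
  | _, [] => 1
  | pre, y :: ys => ((σ pre).elim 0 fun a => M a x y) * likAux M σ x (pre ++ [y]) ys

/-- `p_σ(ys | x)`: the probability of the (maximal) observation sequence `ys`
given the secret `x`, under the finite strategy `σ`. A sequence is maximal when its
last proper prefix is in the domain of `σ` but the sequence itself is not. -/
def condDist (M : A → X → Y → ℝ) (σ : List Y → Option A) (x : X) (ys : List Y) : ℝ :=
  if ys ≠ [] ∧ (σ ys.dropLast).isSome ∧ σ ys = none then likAux M σ x [] ys else 0

/-- joint distribution `p_σ(x, ys)` induced by the prior `p` and the strategy `σ`. -/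
def joint (M : A → X → Y → ℝ) (σ : List Y → Option A) (p : X → ℝ) (x : X) (ys : List Y) : ℝ :=
  p x * condDist M σ x ys

/-- marginal `p_σ(ys)` on observation sequences. -/
def obsProb [Fintype X] (M : A → X → Y → ℝ) (σ : List Y → Option A) (p : X → ℝ)
    (ys : List Y) : ℝ :=
  ∑ x : X, joint M σ p x ys

/-- posterior `p_σ(·|ys)` on secrets. -/
def post [Fintype X] (M : A → X → Y → ℝ) (σ : List Y → Option A) (p : X → ℝ)
    (ys : List Y) : X → ℝ :=
  fun x => joint M σ p x ys / obsProb M σ p ys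

/-- conditional uncertainty `U_σ(X|Y) = Σ_{ys : p_σ(ys)>0} p_σ(ys)·U(p_σ(·|ys))`
(terms with `p_σ(ys) = 0` contribute `0`). -/
def condUncert [Fintype X] (U : (X → ℝ) → ℝ) (M : A → X → Y → ℝ) (σ : List Y → Option A)
    (p : X → ℝ) : ℝ :=
  ∑' ys : List Y, obsProb M σ p ys * U (post M σ p ys)

/-- information leakage `I_σ(S,p) = U(p) − U_σ(X|Y)`. -/
def leak [Fintype X] (U : (X → ℝ) → ℝ) (M : A → X → Y → ℝ) (σ : List Y → Option A)
    (p : X → ℝ) : ℝ :=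
  U p - condUncert U M σ p

/-- the domain of a strategy is prefix-closed. -/
def PrefixClosed (σ : List Y → Option A) : Prop :=
  ∀ l l' : List Y, l <+: l' → (σ l').isSome → (σ l).isSome

/-- a finite strategy: nonempty prefix-closed finite domain. -/
def FiniteStrategy (σ : List Y → Option A) : Prop :=
  (σ []).isSome ∧ PrefixClosed σ ∧ {l : List Y | (σ l).isSome}.Finite

/-- the strategy has length exactly `n` (one plus the maximal length of a sequence
in its domain). -/
def HasLength (σ : List Y → Option A) (n : ℕ) : Prop :=
  (∀ ys, (σ ys).isSome → ys.length + 1 ≤ n) ∧ ∃ ys, (σ ys).isSome ∧ ys.length + 1 = n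

/-- the set of actions occurring in a strategy. -/
def rangeActs (σ : List Y → Option A) : Set A :=
  {a | ∃ ys, σ ys = some a}

/-- the non-adaptive (complete) strategy playing the listed actions in order:
the action played only depends on the number of past observations. -/
def ofList (as : List A) : List Y → Option A := fun ys => as[ys.length]?

/-- an action-based randomization mechanism: each row of each matrix `M_a` is a
probability distribution on observations. -/
def IsMechanism [Fintype Y] (M : A → X → Y → ℝ) : Prop :=
  ∀ a x, M a x ∈ stdSimplex ℝ Y

/-- an uncertainty measure: concave and continuous on the probability simplex. -/
def IsUncertainty [Fintype X] (U : (X → ℝ) → ℝ) : Prop :=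
  ConcaveOn ℝ (stdSimplex ℝ X) U ∧ ContinuousOn U (stdSimplex ℝ X)

/-- indistinguishability: `x ≡ x'` iff `p_a(·|x) = p_a(·|x')` for every action `a`. -/
def mSetoid (M : A → X → Y → ℝ) : Setoid X :=
  ⟨fun x x' => ∀ a y, M a x y = M a x' y,
   ⟨fun _ _ _ => rfl, fun h a y => (h a y).symm, fun h1 h2 a y => (h1 a y).trans (h2 a y)⟩⟩

/-- `p(c)`: total prior mass of the indistinguishability class `c`. -/
def classMass [Fintype X] (M : A → X → Y → ℝ) (p : X → ℝ)
    (c : Quotient (mSetoid M)) : ℝ :=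
  ∑ x ∈ Finset.univ.filter (fun x => Quotient.mk (mSetoid M) x = c), p x

/-- `p(·|c)`: the prior conditioned on the indistinguishability class `c`. -/
def classCondDist [Fintype X] (M : A → X → Y → ℝ) (p : X → ℝ)
    (c : Quotient (mSetoid M)) : X → ℝ :=
  fun x => if Quotient.mk (mSetoid M) x = c then p x / classMass M p c else 0

/-- `U(X|[X]) = Σ_{c ∈ X/≡} p(c)·U(p(·|c))`: the uncertainty left after learning the
indistinguishability class of the secret.  The gain `I(X;[X])` is `U(p) - classUncert`. -/
def classUncert [Fintype X] (U : (X → ℝ) → ℝ) (M : A → X → Y → ℝ) (p : X → ℝ) : ℝ :=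
  ∑ c ∈ Finset.univ.image (Quotient.mk (mSetoid M)),
    classMass M p c * U (classCondDist M p c)

/-! ### Auxiliary development -/

section AuxDev

/-- The unique observation produced by action `a` on secret `x` in a deterministic mechanism. -/
def obsOf [Fintype Y] [Nonempty Y] (M : A → X → Y → ℝ) (a : A) (x : X) : Y :=
  if h : ∃ y, M a x y = 1 then h.choose else Classical.arbitrary Y

lemma row_eq [Fintype Y] [Nonempty Y] {M : A → X → Y → ℝ} (hM : IsMechanism M)
    (hdet : ∀ a x y, M a x y = 0 ∨ M a x y = 1) (a : A) (x : X) (y : Y) :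
    M a x y = if y = obsOf M a x then 1 else 0 := by
  have hex : ∃ y, M a x y = 1 := by
    by_contra h
    push_neg at h
    have h0 : ∀ y, M a x y = 0 := fun y => (hdet a x y).resolve_right (h y)
    have h1 := (hM a x).2
    simp [h0] at h1
  have hobs : M a x (obsOf M a x) = 1 := by
    rw [obsOf, dif_pos hex]; exact hex.choose_spec
  rcases eq_or_ne y (obsOf M a x) with rfl | hne
  · simp [hobs]
  · rw [if_neg hne]
    rcases hdet a x y with h | h
    · exact h
    · exfalso
      have hsub : ({y, obsOf M a x} : Finset Y) ⊆ Finset.univ := Finset.subset_univ _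
      have hnn : ∀ i ∈ Finset.univ, i ∉ ({y, obsOf M a x} : Finset Y) → 0 ≤ M a x i :=
        fun i _ _ => (hM a x).1 i
      have hle := Finset.sum_le_sum_of_subset_of_nonneg hsub hnn
      rw [Finset.sum_pair hne, (hM a x).2, h, hobs] at hle
      linarith

/-- deterministic run of a strategy with fuel. -/
def runS (σ : List Y → Option A) (o : A → X → Y) (x : X) : ℕ → List Y → List Y
  | 0, pre => pre
  | n+1, pre =>
    match σ pre with
    | none => pre
    | some a => runS σ o x n (pre ++ [o a x])

lemma runS_none {σ : List Y → Option A} {o : A → X → Y} {x : X} {pre : List Y}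
    (h : σ pre = none) : ∀ n, runS σ o x n pre = pre
  | 0 => rfl
  | n+1 => by simp [runS, h]

lemma runS_append {σ : List Y → Option A} {o : A → X → Y} {x : X} :
    ∀ (n : ℕ) (pre : List Y), ∃ suf, runS σ o x n pre = pre ++ suf
  | 0, pre => ⟨[], by simp [runS]⟩
  | n+1, pre => by
    cases h : σ pre with
    | none => exact ⟨[], by simp [runS, h]⟩
    | some a =>
      obtain ⟨suf, hsuf⟩ := runS_append (σ := σ) (o := o) (x := x) n (pre ++ [o a x])
      exact ⟨o a x :: suf, by simp [runS, h, hsuf]⟩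

lemma runS_isNone {σ : List Y → Option A} {o : A → X → Y} {x : X} {N : ℕ}
    (hN : ∀ ys, (σ ys).isSome → ys.length + 1 ≤ N) :
    ∀ (n : ℕ) (pre : List Y), N ≤ pre.length + n → σ (runS σ o x n pre) = none
  | 0, pre, h => by
    rw [runS]
    by_contra hne
    have := hN pre (Option.ne_none_iff_isSome.mp hne)
    omega
  | n+1, pre, h => by
    cases hpre : σ pre with
    | none => simp only [runS, hpre]
    | some a =>
      rw [runS, hpre]
      exact runS_isNone hN n (pre ++ [o a x]) (by simp; omega)

lemma runS_dropLast {σ : List Y → Option A} {o : A → X → Y} {x : X} :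
    ∀ (n : ℕ) (pre : List Y), (σ pre).isSome → σ (runS σ o x n pre) = none →
      (σ ((runS σ o x n pre).dropLast)).isSome
  | 0, pre, hs, hn => by rw [runS] at hn; rw [hn] at hs; simp at hs
  | n+1, pre, hs, hn => by
    obtain ⟨a, ha⟩ := Option.isSome_iff_exists.mp hs
    simp only [runS, ha] at hn ⊢
    cases h2 : σ (pre ++ [o a x]) with
    | none =>
      simp only [runS_none h2] at hn ⊢
      simp only [List.dropLast_concat]
      exact hs
    | some b => exact runS_dropLast n (pre ++ [o a x]) (by simp [h2]) hn

lemma likAux_runS {M : A → X → Y → ℝ} {σ : List Y → Option A} {o : A → X → Y} {x : X}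
    (hrow : ∀ a y, M a x y = if y = o a x then 1 else 0) :
    ∀ (n : ℕ) (pre suf : List Y), runS σ o x n pre = pre ++ suf → likAux M σ x pre suf = 1
  | 0, pre, suf, h => by
    rw [runS] at h
    have : suf = [] := by simpa using h.symm
    subst this; rfl
  | n+1, pre, suf, h => by
    cases hpre : σ pre with
    | none =>
      simp only [runS, hpre] at h
      have : suf = [] := by simpa using h.symm
      subst this; rfl
    | some a =>
      simp only [runS, hpre] at h
      obtain ⟨suf', hsuf'⟩ := runS_append (σ := σ) (o := o) (x := x) n (pre ++ [o a x])
      have hkey : pre ++ suf = pre ++ (o a x :: suf') := by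
        rw [← h, hsuf']; simp
      have hsufeq : suf = o a x :: suf' := List.append_cancel_left hkey
      subst hsufeq
      have hIH : likAux M σ x (pre ++ [o a x]) suf' = 1 :=
        likAux_runS hrow n (pre ++ [o a x]) suf' hsuf'
      simp only [likAux, hpre, Option.elim_some, hIH, mul_one]
      simp [hrow]

lemma likAux_unique {M : A → X → Y → ℝ} {σ : List Y → Option A} {o : A → X → Y} {x : X}
    (hrow : ∀ a y, M a x y = if y = o a x then 1 else 0) :
    ∀ (ys pre : List Y) (n : ℕ), likAux M σ x pre ys ≠ 0 → σ (pre ++ ys) = none →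
      ys.length ≤ n → runS σ o x n pre = pre ++ ys
  | [], pre, n, _, hnone, _ => by
    rw [List.append_nil] at hnone ⊢
    exact runS_none hnone n
  | y :: ys', pre, n, hne, hnone, hlen => by
    have hne' : ((σ pre).elim 0 fun a => M a x y) ≠ 0 ∧ likAux M σ x (pre ++ [y]) ys' ≠ 0 := by
      have := mul_ne_zero_iff.mp hne
      exact this
    obtain ⟨h1, h2⟩ := hne'
    cases hpre : σ pre with
    | none => rw [hpre] at h1; simp at h1
    | some a =>
      rw [hpre] at h1
      simp only [Option.elim_some] at h1
      rw [hrow a y] at h1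
      have hy : y = o a x := by
        by_contra hc; rw [if_neg hc] at h1; exact h1 rfl
      obtain ⟨m, rfl⟩ : ∃ m, n = m + 1 := by
        cases n with
        | zero => simp at hlen
        | succ m => exact ⟨m, rfl⟩
      subst hy
      simp only [runS, hpre]
      have hnone' : σ ((pre ++ [o a x]) ++ ys') = none := by
        rw [List.append_assoc]; simpa using hnone
      have hlen' : ys'.length ≤ m := by simp at hlen; omega
      have := likAux_unique hrow ys' (pre ++ [o a x]) m h2 hnone' hlen'
      rw [this]; simp

/-- the deterministic observation trace of secret `x` under strategy `σ`. -/
def traceOf (σ : List Y → Option A) (o : A → X → Y) (N : ℕ) (x : X) : List Y :=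
  runS σ o x N []

lemma condDist_eq {M : A → X → Y → ℝ} {σ : List Y → Option A} {o : A → X → Y} {x : X} {N : ℕ}
    (hrow : ∀ a y, M a x y = if y = o a x then 1 else 0)
    (h0 : (σ []).isSome) (hN : ∀ ys, (σ ys).isSome → ys.length + 1 ≤ N) (ys : List Y) :
    condDist M σ x ys = if ys = traceOf σ o N x then 1 else 0 := by
  have htnone : σ (traceOf σ o N x) = none := runS_isNone hN N [] (by simp)
  have htne : traceOf σ o N x ≠ [] := by
    intro h; rw [h] at htnone; rw [htnone] at h0; simp at h0
  have htdrop : (σ ((traceOf σ o N x).dropLast)).isSome := runS_dropLast N [] h0 htnone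
  have hlik : likAux M σ x [] (traceOf σ o N x) = 1 :=
    likAux_runS hrow N [] _ (by simp [traceOf])
  split
  · next h =>
    subst h
    rw [condDist, if_pos ⟨htne, htdrop, htnone⟩, hlik]
  · next h =>
    rw [condDist]
    split
    · next hc =>
      obtain ⟨hne, hdrop, hnone⟩ := hc
      by_contra hz
      have hlen : ys.length ≤ N := by
        have := hN ys.dropLast hdrop
        have : ys.dropLast.length + 1 ≤ N := this
        rw [List.length_dropLast] at this
        have : ys.length ≠ 0 := by simpa using hne
        omega
      have := likAux_unique hrow ys [] N hz (by simpa using hnone) hlen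
      exact h (by simpa [traceOf] using this.symm)
    · rfl

lemma traceOf_congr {σ : List Y → Option A} {o : A → X → Y} {N : ℕ} {x x' : X}
    (h : ∀ a, o a x = o a x') : traceOf σ o N x = traceOf σ o N x' := by
  have : ∀ (n : ℕ) (pre : List Y), runS σ o x n pre = runS σ o x' n pre := by
    intro n
    induction n with
    | zero => intro pre; rfl
    | succ n ih =>
      intro pre
      cases hpre : σ pre with
      | none => simp [runS, hpre]
      | some a => simp [runS, hpre, h a, ih]
  exact this N []

end AuxDev
section MainDev

lemma runS_ofList {as : List A} {o : A → X → Y} {x : X} :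
    ∀ (cs : List A) (pre : List Y) (n : ℕ), cs = as.drop pre.length → cs.length ≤ n →
      runS (ofList as) o x n pre = pre ++ cs.map (fun a => o a x)
  | [], pre, n, hcs, _ => by
    have hlen : as.length ≤ pre.length := List.drop_eq_nil_iff.mp hcs.symm
    have hnone : (ofList as : List Y → Option A) pre = none := by
      simp [ofList, List.getElem?_eq_none hlen]
    rw [runS_none hnone]
    simp
  | c :: cs', pre, n, hcs, hlen => by
    have hsome : (ofList as : List Y → Option A) pre = some c := by
      have h1 : (as.drop pre.length).head? = some c := by rw [← hcs]; rfl
      rw [List.head?_drop] at h1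
      simpa [ofList] using h1
    obtain ⟨m, rfl⟩ : ∃ m, n = m + 1 := by
      cases n with
      | zero => simp at hlen
      | succ m => exact ⟨m, rfl⟩
    simp only [runS, hsome]
    have hlen1 : (pre ++ [o c x]).length = pre.length + 1 := by simp
    have hcs' : cs' = as.drop ((pre ++ [o c x]).length) := by
      have h2 : (as.drop pre.length).tail = as.drop (pre.length + 1) := List.tail_drop
      rw [← hcs] at h2
      simp only [List.tail_cons] at h2
      rw [hlen1, ← h2]
    have hIH := runS_ofList (as := as) (o := o) (x := x) cs' (pre ++ [o c x]) m hcs' (by simp at hlen ⊢; omega)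
    rw [hIH]
    simp

lemma traceOf_ofList {as : List A} (o : A → X → Y) (x : X) :
    traceOf (ofList as : List Y → Option A) o as.length x = as.map (fun a => o a x) := by
  have := runS_ofList (as := as) (o := o) (x := x) as [] as.length (by simp) le_rfl
  simpa [traceOf] using this

lemma key_lemma [Fintype X] [Fintype Y] [Nonempty Y]
    (M : A → X → Y → ℝ) (hM : IsMechanism M) (hdet : ∀ a x y, M a x y = 0 ∨ M a x y = 1)
    (U : (X → ℝ) → ℝ) (hU : ConcaveOn ℝ (stdSimplex ℝ X) U)
    (p : X → ℝ) (hp : ∀ x, 0 ≤ p x)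
    (σ : List Y → Option A) (h0 : (σ []).isSome) (N : ℕ)
    (hN : ∀ ys, (σ ys).isSome → ys.length + 1 ≤ N) :
    classUncert U M p ≤ condUncert U M σ p ∧
      ((∀ x x' : X, traceOf σ (obsOf M) N x = traceOf σ (obsOf M) N x' →
          ∀ a y, M a x y = M a x' y) →
        condUncert U M σ p = classUncert U M p) := by
  classical
  set o := obsOf M with ho
  have hrow : ∀ x a y, M a x y = if y = o a x then 1 else 0 := fun x a y => row_eq hM hdet a x y
  set tr : X → List Y := traceOf σ o N with htr
  have hcond : ∀ (x : X) (ys : List Y), condDist M σ x ys = if ys = tr x then 1 else 0 :=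
    fun x ys => condDist_eq (hrow x) h0 hN ys
  have hobseq : ∀ (x x' : X), (∀ a y, M a x y = M a x' y) → ∀ a, o a x = o a x' := by
    intro x x' h a
    have h1 : M a x' (o a x') = 1 := by rw [hrow x']; simp
    have h2 : M a x (o a x') = 1 := by rw [h a]; exact h1
    rw [hrow x] at h2
    by_contra hc
    rw [if_neg (fun he => hc he.symm)] at h2
    exact one_ne_zero h2.symm
  have htr_resp : ∀ (x x' : X), (∀ a y, M a x y = M a x' y) → tr x = tr x' :=
    fun x x' h => traceOf_congr (hobseq x x' h)
  set tq : Quotient (mSetoid M) → List Y := Quotient.lift tr htr_resp with htqdef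
  have htq : ∀ x : X, tq (Quotient.mk (mSetoid M) x) = tr x := fun _ => rfl
  set C : Finset (Quotient (mSetoid M)) := Finset.univ.image (Quotient.mk (mSetoid M)) with hC
  set T : Finset (List Y) := Finset.univ.image tr with hT
  have hobsP : ∀ ys, obsProb M σ p ys = ∑ x ∈ Finset.univ.filter (fun x => tr x = ys), p x := by
    intro ys
    rw [obsProb, Finset.sum_filter]
    refine Finset.sum_congr rfl fun x _ => ?_
    rw [joint, hcond]
    rcases eq_or_ne (tr x) ys with h | h
    · rw [if_pos h, if_pos h.symm, mul_one]
    · rw [if_neg h, if_neg (Ne.symm h), mul_zero]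
  have hobs_nn : ∀ ys, 0 ≤ obsProb M σ p ys := by
    intro ys; rw [hobsP]; exact Finset.sum_nonneg fun x _ => hp x
  have hmass : ∀ c, classMass M p c
      = ∑ x ∈ Finset.univ.filter (fun x => Quotient.mk (mSetoid M) x = c), p x := fun c => rfl
  have hmass_nn : ∀ c, 0 ≤ classMass M p c := by
    intro c; rw [hmass]; exact Finset.sum_nonneg fun x _ => hp x
  have hout : ∀ ys ∉ T, obsProb M σ p ys * U (post M σ p ys) = 0 := by
    intro ys hys
    have hz : obsProb M σ p ys = 0 := by
      rw [hobsP]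
      apply Finset.sum_eq_zero
      intro x hx
      exact absurd (Finset.mem_image.mpr ⟨x, Finset.mem_univ x, (Finset.mem_filter.mp hx).2⟩)
        (by rw [← hT] at *; exact hys)
    rw [hz, zero_mul]
  have hsumT : condUncert U M σ p = ∑ ys ∈ T, obsProb M σ p ys * U (post M σ p ys) :=
    tsum_eq_sum hout
  have hmapsCT : ∀ c ∈ C, tq c ∈ T := by
    intro c hc
    obtain ⟨x, _, rfl⟩ := Finset.mem_image.mp hc
    rw [htq, hT]
    exact Finset.mem_image.mpr ⟨x, Finset.mem_univ x, rfl⟩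
  have hgroup : classUncert U M p =
      ∑ ys ∈ T, ∑ c ∈ C.filter (fun c => tq c = ys),
        classMass M p c * U (classCondDist M p c) := by
    rw [classUncert, ← hC]
    exact (Finset.sum_fiberwise_of_maps_to hmapsCT _).symm
  have hOP : ∀ ys, obsProb M σ p ys = ∑ c ∈ C.filter (fun c => tq c = ys), classMass M p c := by
    intro ys
    rw [hobsP]
    have hmaps : ∀ x ∈ Finset.univ.filter (fun x => tr x = ys),
        Quotient.mk (mSetoid M) x ∈ C.filter (fun c => tq c = ys) := by
      intro x hx
      refine Finset.mem_filter.mpr ⟨?_, ?_⟩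
      · rw [hC]; exact Finset.mem_image.mpr ⟨x, Finset.mem_univ x, rfl⟩
      · rw [htq]; exact (Finset.mem_filter.mp hx).2
    rw [← Finset.sum_fiberwise_of_maps_to hmaps p]
    refine Finset.sum_congr rfl fun c hc => ?_
    rw [hmass]
    refine Finset.sum_congr ?_ fun _ _ => rfl
    rw [Finset.filter_filter]
    apply Finset.filter_congr
    intro x _
    have htqc : tq c = ys := (Finset.mem_filter.mp hc).2
    constructor
    · exact fun h => h.2
    · intro h
      refine ⟨?_, h⟩
      rw [← htq x, h, htqc]
  have hJ : ∀ ys ∈ T,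
      ∑ c ∈ C.filter (fun c => tq c = ys), classMass M p c * U (classCondDist M p c) ≤
        obsProb M σ p ys * U (post M σ p ys) := by
    intro ys _
    set s := C.filter (fun c => tq c = ys) with hsdef
    set t := s.filter (fun c => 0 < classMass M p c) with htdef
    have hsum_t : ∑ c ∈ t, classMass M p c = obsProb M σ p ys := by
      have h1 : ∑ c ∈ t, classMass M p c = ∑ c ∈ s, classMass M p c :=
        Finset.sum_filter_of_ne (fun c _ hne => lt_of_le_of_ne (hmass_nn c) (Ne.symm hne))
      rw [h1]; exact (hOP ys).symm
    have hLHS : ∑ c ∈ s, classMass M p c * U (classCondDist M p c)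
        = ∑ c ∈ t, classMass M p c * U (classCondDist M p c) :=
      (Finset.sum_filter_of_ne (fun c _ hne => by
        rcases (hmass_nn c).eq_or_lt with h | h
        · exact absurd (by rw [← h, zero_mul]) hne
        · exact h)).symm
    rw [hLHS]
    rcases (hobs_nn ys).eq_or_lt with hzero | hpos
    · have hall0 : ∀ c ∈ t, classMass M p c = 0 :=
        (Finset.sum_eq_zero_iff_of_nonneg (fun c _ => hmass_nn c)).mp (by rw [hsum_t, ← hzero])
      rw [← hzero, zero_mul]
      apply le_of_eq
      apply Finset.sum_eq_zero
      intro c hc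
      rw [hall0 c hc, zero_mul]
    · have hobs_ne : obsProb M σ p ys ≠ 0 := ne_of_gt hpos
      set w : Quotient (mSetoid M) → ℝ := fun c => classMass M p c / obsProb M σ p ys with hw
      have hw_nn : ∀ c ∈ t, 0 ≤ w c := fun c _ => div_nonneg (hmass_nn c) (hobs_nn ys)
      have hw_sum : ∑ c ∈ t, w c = 1 := by
        rw [hw]
        rw [← Finset.sum_div, hsum_t, div_self hobs_ne]
      have hmem : ∀ c ∈ t, classCondDist M p c ∈ stdSimplex ℝ X := by
        intro c hc
        have hcpos : (0:ℝ) < classMass M p c := (Finset.mem_filter.mp hc).2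
        constructor
        · intro x
          simp only [classCondDist]
          split
          · exact div_nonneg (hp x) (hmass_nn c)
          · exact le_refl 0
        · calc ∑ x : X, classCondDist M p c x
              = ∑ x ∈ Finset.univ.filter (fun x => Quotient.mk (mSetoid M) x = c),
                  p x / classMass M p c := by
                rw [Finset.sum_filter]
                refine Finset.sum_congr rfl fun x _ => ?_
                rw [classCondDist]
            _ = classMass M p c / classMass M p c := by rw [← Finset.sum_div, ← hmass]
            _ = 1 := div_self (ne_of_gt hcpos)
      have hpostx : ∀ x, post M σ p ys x
          = p x * (if ys = tr x then 1 else 0) / obsProb M σ p ys := by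
        intro x; simp only [post, joint]; rw [hcond]
      have hcomb : ∑ c ∈ t, w c • classCondDist M p c = post M σ p ys := by
        funext x
        have hLHS2 : (∑ c ∈ t, w c • classCondDist M p c) x
            = ∑ c ∈ t, w c * classCondDist M p c x := by
          rw [Finset.sum_apply]; rfl
        rw [hLHS2]
        by_cases hx : Quotient.mk (mSetoid M) x ∈ t
        · have hxt := Finset.mem_filter.mp hx
          have hmassx : (0:ℝ) < classMass M p (Quotient.mk (mSetoid M) x) := hxt.2
          have htrx : tr x = ys := by
            have h' := (Finset.mem_filter.mp hxt.1).2
            rw [htq] at h'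
            exact h'
          rw [Finset.sum_eq_single_of_mem _ hx (fun c hct hne => by
            have hne' : ¬(Quotient.mk (mSetoid M) x = c) := fun h => hne h.symm
            simp only [classCondDist]
            rw [if_neg hne', mul_zero])]
          have hccd : classCondDist M p (Quotient.mk (mSetoid M) x) x
              = p x / classMass M p (Quotient.mk (mSetoid M) x) := by
            simp [classCondDist]
          rw [hccd, hpostx, if_pos htrx.symm, mul_one]
          simp only [hw]
          field_simp
        · rw [Finset.sum_eq_zero (fun c hc => by
            have hne : Quotient.mk (mSetoid M) x ≠ c := fun h => hx (h ▸ hc)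
            simp only [classCondDist]
            rw [if_neg hne, mul_zero])]
          rw [hpostx]
          by_cases htrx : ys = tr x
          · have hqs : Quotient.mk (mSetoid M) x ∈ s := by
              rw [hsdef]
              refine Finset.mem_filter.mpr ⟨?_, ?_⟩
              · rw [hC]; exact Finset.mem_image.mpr ⟨x, Finset.mem_univ x, rfl⟩
              · rw [htq]; exact htrx.symm
            have hm0 : classMass M p (Quotient.mk (mSetoid M) x) = 0 := by
              by_contra hne
              exact hx (Finset.mem_filter.mpr ⟨hqs,
                lt_of_le_of_ne (hmass_nn _) (Ne.symm hne)⟩)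
            have hpx : p x = 0 := by
              have := (Finset.sum_eq_zero_iff_of_nonneg (fun x _ => hp x)).mp
                ((hmass _).symm.trans hm0)
              exact this x (Finset.mem_filter.mpr ⟨Finset.mem_univ x, rfl⟩)
            rw [hpx, zero_mul, zero_div]
          · rw [if_neg htrx, mul_zero, zero_div]
      have hjensen := hU.le_map_sum hw_nn hw_sum hmem
      rw [hcomb] at hjensen
      have hfinal : ∑ c ∈ t, classMass M p c * U (classCondDist M p c)
          = obsProb M σ p ys * ∑ c ∈ t, w c * U (classCondDist M p c) := by
        rw [Finset.mul_sum]
        refine Finset.sum_congr rfl fun c _ => ?_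
        rw [hw]
        field_simp
      rw [hfinal]
      have hjensen' : ∑ c ∈ t, w c * U (classCondDist M p c) ≤ U (post M σ p ys) := by
        simpa [smul_eq_mul] using hjensen
      exact mul_le_mul_of_nonneg_left hjensen' (hobs_nn ys)
  constructor
  · rw [hsumT, hgroup]
    exact Finset.sum_le_sum hJ
  · intro hinj
    have htq_inj : ∀ c ∈ C, ∀ c' ∈ C, tq c = tq c' → c = c' := by
      intro c hc c' hc' h
      obtain ⟨x, _, rfl⟩ := Finset.mem_image.mp hc
      obtain ⟨x', _, rfl⟩ := Finset.mem_image.mp hc'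
      exact Quotient.sound (hinj x x' h)
    have hTC : T = C.image tq := by
      rw [hT, hC, Finset.image_image]
      rfl
    have htr_iff : ∀ (x : X) (c : Quotient (mSetoid M)), c ∈ C →
        (tr x = tq c ↔ Quotient.mk (mSetoid M) x = c) := by
      intro x c hc
      constructor
      · intro h
        exact htq_inj _ (by rw [hC]; exact Finset.mem_image.mpr ⟨x, Finset.mem_univ x, rfl⟩) c hc h
      · intro h; rw [← h, htq]
    have hobs_c : ∀ c ∈ C, obsProb M σ p (tq c) = classMass M p c := by
      intro c hc
      rw [hobsP, hmass]
      refine Finset.sum_congr ?_ fun _ _ => rfl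
      apply Finset.filter_congr
      intro x _
      exact htr_iff x c hc
    have hpost_c : ∀ c ∈ C, post M σ p (tq c) = classCondDist M p c := by
      intro c hc
      funext x
      simp only [post, joint, classCondDist]
      rw [hcond, hobs_c c hc]
      by_cases h : Quotient.mk (mSetoid M) x = c
      · rw [if_pos h, if_pos ((htr_iff x c hc).mpr h).symm, mul_one]
      · rw [if_neg h, if_neg (fun he => h ((htr_iff x c hc).mp he.symm)), mul_zero, zero_div]
    rw [hsumT, hTC, Finset.sum_image htq_inj, classUncert, ← hC]
    refine Finset.sum_congr rfl fun c hc => ?_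
    rw [hobs_c c hc, hpost_c c hc]

end MainDev
/-- Proposition 5.4: if `S` is deterministic and `σ = [a_1,…,a_k]` is the
non-adaptive strategy playing every action of `Act` exactly once, then
`I_σ(S,p) = I(X;[X])`; hence `σ` achieves the maximum information flow,
i.e. `I_σ'(S,p) ≤ I_σ(S,p)` for every finite strategy `σ'`. -/
theorem deterministic_bruteforce_achieves_max
    [Fintype X] [Fintype Y] [Fintype A] [Nonempty X] [Nonempty Y] [Nonempty A]
    (M : A → X → Y → ℝ) (hM : IsMechanism M)
    (hdet : ∀ a x y, M a x y = 0 ∨ M a x y = 1)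
    (U : (X → ℝ) → ℝ) (hU : IsUncertainty U)
    (p : X → ℝ) (hp : p ∈ stdSimplex ℝ X)
    (as : List A) (hnodup : as.Nodup) (hall : ∀ a : A, a ∈ as) :
    leak U M (ofList as : List Y → Option A) p = U p - classUncert U M p ∧
      ∀ σ : List Y → Option A, FiniteStrategy σ →
        leak U M σ p ≤ leak U M (ofList as : List Y → Option A) p := by
  classical
  have asne : as ≠ [] := List.ne_nil_of_mem (hall (Classical.arbitrary A))
  have h0of : ((ofList as : List Y → Option A) []).isSome := by
    cases as with
    | nil => exact absurd rfl asne
    | cons a t => simp [ofList]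
  have hNof : ∀ ys : List Y, ((ofList as : List Y → Option A) ys).isSome →
      ys.length + 1 ≤ as.length := by
    intro ys h
    simp only [ofList] at h
    by_contra hge
    rw [List.getElem?_eq_none (by omega)] at h
    simp at h
  have hinj : ∀ x x' : X, traceOf (ofList as : List Y → Option A) (obsOf M) as.length x
      = traceOf (ofList as : List Y → Option A) (obsOf M) as.length x' →
      ∀ a y, M a x y = M a x' y := by
    intro x x' h a y
    rw [traceOf_ofList, traceOf_ofList] at h
    have hmap : ∀ b ∈ as, obsOf M b x = obsOf M b x' := by
      intro b hb
      obtain ⟨i, hi, rfl⟩ := List.mem_iff_getElem.mp hb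
      have h2 := congrArg (fun l => l[i]?) h
      simpa [List.getElem?_map, List.getElem?_eq_getElem hi] using h2
    rw [row_eq hM hdet a x y, row_eq hM hdet a x' y, hmap a (hall a)]
  have key_of := key_lemma M hM hdet U hU.1 p hp.1 (ofList as) h0of as.length hNof
  have heq := key_of.2 hinj
  constructor
  · simp only [leak]
    rw [heq]
  · intro σ hσ
    obtain ⟨h0σ, -, hfin⟩ := hσ
    obtain ⟨B, hB⟩ := (hfin.image List.length).bddAbove
    have hNσ : ∀ ys : List Y, (σ ys).isSome → ys.length + 1 ≤ B + 1 := by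
      intro ys h
      have : ys.length ≤ B := hB ⟨ys, h, rfl⟩
      omega
    have key_s := key_lemma M hM hdet U hU.1 p hp.1 σ h0σ (B + 1) hNσ
    simp only [leak]
    rw [heq]
    have hle := key_s.1
    linarith

end
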